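/- Let m > 0 and 0 < s < m/2 be real numbers, let O = (m/2, 0) be the launch point, and let t = (t₁, t₂) be any point with m/2 − s ≤ t₁ ≤ m/2 + s and m − s ≤ t₂ ≤ m. A shot from O that reflects exactly once off the left wall (the line x = 0) and then reaches t travels along the straight segment from O to the mirror image (−t₁, t₂) of t. The slope ratio of this unfolded segment satisfies (m − s)/(m + s) ≤ t₂/(m/2 + t₁) ≤ m/(m − s). (Hence as s/m → 0, the rebound angle tends to 45°; all single-rebound shots that hit the small central square arrive at approximately 45°.) -/
import Mathlib

/-- A shot from `O = (m/2, 0)` that reflects once off the left wall `x = 0` and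
then reaches a target `t = (t₁, t₂)` in the small square
`[m/2 - s, m/2 + s] × [m - s, m]` (with `0 < s < m/2`) travels, after unfolding,
along the straight segment from `O` to the mirror image `(-t₁, t₂)` of `t`.
The slope ratio `t₂ / (m/2 + t₁)` of this unfolded segment (vertical rise over
horizontal run `m/2 - (-t₁) = m/2 + t₁`) satisfies
`(m - s)/(m + s) ≤ t₂/(m/2 + t₁) ≤ m/(m - s)`. -/
theorem rebound_shot_nearly_45_degrees
    (m s t₁ t₂ : ℝ) (hm : 0 < m) (hs : 0 < s) (hsm : s < m / 2)
    (ht₁l : m / 2 - s ≤ t₁) (ht₁r : t₁ ≤ m / 2 + s)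
    (ht₂l : m - s ≤ t₂) (ht₂r : t₂ ≤ m) :
    (m - s) / (m + s) ≤ t₂ / (m / 2 + t₁) ∧
    t₂ / (m / 2 + t₁) ≤ m / (m - s) := by
  have hms : 0 < m - s := by linarith
  have hden : 0 < m / 2 + t₁ := by linarith
  constructor
  · apply div_le_div₀ (by linarith) (by linarith) hden (by linarith)
  · apply div_le_div₀ (le_of_lt hm) ht₂r hms (by linarith)
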